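/- For every k ≥ 3, the Hanoi group H_c^{(k)} is contracting; its prenucleus, and hence its nucleus, equals S_{k,1} ∪ {1}. -/

import Mathlib

/-!
Common framework: automorphisms of the rooted tree `X_k^*`, root permutations,
sections, self-similar and contracting groups, Hanoi automorphisms and Hanoi
groups, following Makisumi–Stadnyk–Steinhurst, "Modified Hanoi Towers Groups
and Limit Spaces".

A word `x_n … x_1` over the alphabet `X_k = Fin k` is encoded as the list
`[x_n, …, x_1]`, whose head `x_n` is the first letter, i.e. the letter that a
tree automorphism reads (and permutes) first.
-/

namespace Hanoi

/-- Words over the alphabet `X_k = Fin k`. -/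
abbrev Word (k : ℕ) := List (Fin k)

/-- `e` is an automorphism of the rooted tree `X_k^*`: it fixes the root
(the empty word), preserves word length (levels) and preserves the tree
structure (words sharing an initial segment of length `n` are sent to words
sharing an initial segment of length `n`). -/
def IsTreeAut {k : ℕ} (e : Equiv.Perm (Word k)) : Prop :=
  (∀ w : Word k, (e w).length = w.length) ∧
    ∀ (w v : Word k) (n : ℕ), w.take n = v.take n → (e w).take n = (e v).take n

open Classical in
/-- The root permutation `σ_e` of a tree automorphism `e` (its action on
one-letter words). -/
noncomputable def rootPerm {k : ℕ} (e : Equiv.Perm (Word k)) : Equiv.Perm (Fin k) :=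
  if h : Function.Bijective (fun x : Fin k => ((e [x]).head?.getD x)) then
    Equiv.ofBijective _ h
  else 1

open Classical in
/-- The section `e|_x` of `e` at a letter `x`: the unique automorphism with
`e (x :: w) = σ_e x :: (e|_x) w` for all words `w`. -/
noncomputable def sec {k : ℕ} (e : Equiv.Perm (Word k)) (x : Fin k) : Equiv.Perm (Word k) :=
  if h : Function.Bijective (fun w : Word k => (e (x :: w)).tail) then
    Equiv.ofBijective _ h
  else 1

/-- The section `e|_v` of `e` at a word `v = x_n … x_1`, defined by
`e|_v = (e|_{x_n})|_{x_{n-1} … x_1}`. -/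
noncomputable def secW {k : ℕ} (e : Equiv.Perm (Word k)) : Word k → Equiv.Perm (Word k)
  | [] => e
  | x :: v => secW (sec e x) v

/-- A subgroup of the permutations of `X_k^*` is self-similar if it consists of
tree automorphisms and is closed under taking sections. -/
def IsSelfSimilar {k : ℕ} (G : Subgroup (Equiv.Perm (Word k))) : Prop :=
  (∀ g ∈ G, IsTreeAut g) ∧ ∀ g ∈ G, ∀ x : Fin k, sec g x ∈ G

/-- A self-similar group `G` is contracting if there is a finite subset `N ⊆ G`
such that for every `g ∈ G` all sections of `g` at words of length at least
some `m` lie in `N`. -/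
def IsContracting {k : ℕ} (G : Subgroup (Equiv.Perm (Word k))) : Prop :=
  ∃ N : Set (Equiv.Perm (Word k)), N.Finite ∧ N ⊆ (G : Set (Equiv.Perm (Word k))) ∧
    ∀ g ∈ G, ∃ m : ℕ, ∀ v : Word k, m ≤ v.length → secW g v ∈ N

/-- `N` is the nucleus of `G`: a smallest finite subset of `G` catching all
deep enough sections of every element of `G`. -/
def IsNucleus {k : ℕ} (G : Subgroup (Equiv.Perm (Word k)))
    (N : Set (Equiv.Perm (Word k))) : Prop :=
  (N.Finite ∧ N ⊆ (G : Set (Equiv.Perm (Word k))) ∧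
    ∀ g ∈ G, ∃ m : ℕ, ∀ v : Word k, m ≤ v.length → secW g v ∈ N) ∧
  ∀ N' : Set (Equiv.Perm (Word k)), N'.Finite → N' ⊆ (G : Set (Equiv.Perm (Word k))) →
    (∀ g ∈ G, ∃ m : ℕ, ∀ v : Word k, m ≤ v.length → secW g v ∈ N') → N ⊆ N'

/-- `a` is a Hanoi automorphism with set of inactive pegs `Q`: the section at
each active peg (element of the complement of `Q`) is trivial, the section at
each inactive peg is `a` itself, and the root permutation fixes each inactive
peg. -/
def IsHanoiWith {k : ℕ} (a : Equiv.Perm (Word k)) (Q : Set (Fin k)) : Prop :=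
  IsTreeAut a ∧ (∀ i ∉ Q, sec a i = 1) ∧ (∀ j ∈ Q, sec a j = a) ∧
    ∀ j ∈ Q, rootPerm a j = j

/-- `a` is a `k`-peg Hanoi automorphism. -/
def IsHanoiAut {k : ℕ} (a : Equiv.Perm (Word k)) : Prop := ∃ Q, IsHanoiWith a Q

open Classical in
/-- The set `Q_a` of inactive pegs of a Hanoi automorphism `a`; by convention
`Q_1 = X_k` (for `a ≠ 1` the set of inactive pegs is uniquely determined). -/
noncomputable def inactivePegs {k : ℕ} (a : Equiv.Perm (Word k)) : Set (Fin k) :=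
  if a = 1 then Set.univ
  else if h : ∃ Q, IsHanoiWith a Q then h.choose else ∅

/-- `S_{k,q}`: the set of Hanoi automorphisms over `X_k` with exactly `q`
inactive pegs. -/
noncomputable def hanoiSet (k q : ℕ) : Set (Equiv.Perm (Word k)) :=
  {a | IsHanoiAut a ∧ (inactivePegs a).ncard = q}

/-- `L = [s_n, …, s_1]` is a representation of `g` over the generating set `S`:
each `s_i ∈ S ∪ S⁻¹` and `g = s_n ⋯ s_2 s_1`. -/
def IsRepOf {k : ℕ} (S : Set (Equiv.Perm (Word k))) (L : List (Equiv.Perm (Word k)))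
    (g : Equiv.Perm (Word k)) : Prop :=
  (∀ s ∈ L, s ∈ S ∨ s⁻¹ ∈ S) ∧ L.prod = g

/-- The length `l(g)` of `g` with respect to `S`: the length of a minimal
representation (`0` for the identity). -/
noncomputable def repLength {k : ℕ} (S : Set (Equiv.Perm (Word k)))
    (g : Equiv.Perm (Word k)) : ℕ :=
  sInf {n | ∃ L, IsRepOf S L g ∧ L.length = n}

/-- The essential set of a representation: the intersection of the sets of
inactive pegs of its letters. -/
noncomputable def essSet {k : ℕ} (L : List (Equiv.Perm (Word k))) : Set (Fin k) :=
  ⋂ s ∈ L, inactivePegs s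

/-- The prenucleus of `G`: the set of elements `g ∈ G` with `g|_j = g` for some
letter `j`. -/
noncomputable def preNucleus {k : ℕ} (G : Subgroup (Equiv.Perm (Word k))) :
    Set (Equiv.Perm (Word k)) :=
  {g | g ∈ G ∧ ∃ j : Fin k, sec g j = g}

/-- The underlying function of the Hanoi Towers move `a_{ij}`: it changes the
first occurrence of `i` or `j` in a word by means of the transposition `(i j)`
and leaves the rest of the word unchanged. -/
def hanoiMoveFun {k : ℕ} (i j : Fin k) : Word k → Word k
  | [] => []
  | x :: w => if x = i ∨ x = j then Equiv.swap i j x :: w else x :: hanoiMoveFun i j w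

theorem hanoiMoveFun_involutive {k : ℕ} (i j : Fin k) :
    Function.Involutive (hanoiMoveFun i j) := by
  intro w
  induction w with
  | nil => rfl
  | cons x t ih =>
    by_cases h : x = i ∨ x = j
    · have h2 : Equiv.swap i j x = i ∨ Equiv.swap i j x = j := by
        rcases h with h | h <;> subst h <;> simp
      simp only [hanoiMoveFun, if_pos h, if_pos h2, Equiv.swap_apply_self]
    · simp only [hanoiMoveFun, if_neg h, ih]

/-- The Hanoi Towers move `a_{ij}`, as a permutation of `X_k^*`: its root
permutation is the transposition `(i j)`, its sections at `i` and `j` are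
trivial and all its other sections equal `a_{ij}` itself. -/
def hanoiMove {k : ℕ} (i j : Fin k) : Equiv.Perm (Word k) :=
  (hanoiMoveFun_involutive i j).toPerm

/-- The orbit of the letter `j` under the subgroup of `Sym(X_k)` generated by
the root permutations of the elements of `T`. -/
noncomputable def orbT {k : ℕ} (T : Finset (Equiv.Perm (Word k))) (j : Fin k) : Set (Fin k) :=
  MulAction.orbit (Subgroup.closure ((fun a => rootPerm a) '' (T : Set (Equiv.Perm (Word k))))) j

/-- The set `Fix(T)` of letters fixed by the root permutation of every element
of `T`. -/
noncomputable def fixT {k : ℕ} (T : Finset (Equiv.Perm (Word k))) : Set (Fin k) :=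
  {x | ∀ s ∈ T, rootPerm s x = x}

/-- Condition (*) on a generating set `S` of Hanoi automorphisms: for every
finite `T ⊆ S` with nonempty essential set and every letter `j ∉ Fix(T)`,
the orbit of `j` misses the inactive pegs of some element of `T`. -/
noncomputable def CondStar {k : ℕ} (S : Set (Equiv.Perm (Word k))) : Prop :=
  ∀ T : Finset (Equiv.Perm (Word k)), (T : Set (Equiv.Perm (Word k))) ⊆ S →
    (⋂ s ∈ T, inactivePegs s).Nonempty →
    ∀ j : Fin k, j ∉ fixT T →
      ∃ s ∈ T, orbT T j ∩ inactivePegs s = ∅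

open Classical in
/-- `d(g)`: the least number of distinct generators occurring among all
representations of `g` having nonempty essential set. -/
noncomputable def dCount {k : ℕ} (S : Set (Equiv.Perm (Word k)))
    (g : Equiv.Perm (Word k)) : ℕ :=
  sInf {M | ∃ L, IsRepOf S L g ∧ (essSet L).Nonempty ∧ L.toFinset.card = M}

/-- `S` is fully symmetric: for every non-identity `a ∈ S` and every
`φ ∈ Sym(X_k)`, the Hanoi automorphism `φ·a` with inactive pegs `φ(Q_a)` and
root permutation `φ ∘ σ_a ∘ φ⁻¹` again lies in `S`. -/
noncomputable def FullySymmetric {k : ℕ} (S : Set (Equiv.Perm (Word k))) : Prop :=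
  ∀ a ∈ S, a ≠ 1 → ∀ φ : Equiv.Perm (Fin k), ∀ b : Equiv.Perm (Word k),
    IsHanoiWith b (φ '' inactivePegs a) →
    rootPerm b = φ * rootPerm a * φ⁻¹ → b ∈ S

/-- The family `R̲_{k,n}`: the identity together with all Hanoi automorphisms
`a` such that (1) `Q_a ⊆ {m+1, …, m+n}` for some `m`, and (2) whenever
`i ∈ Q_a` the root permutation of `a` fixes `i-1, …, i-(n-1)`
(all peg labels mod `k`). -/
noncomputable def Runder (k n : ℕ) : Set (Equiv.Perm (Word k)) :=
  {a | a = 1 ∨ (IsHanoiAut a ∧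
    (∃ m : Fin k, ∀ q ∈ inactivePegs a, ∃ t : ℕ, 1 ≤ t ∧ t ≤ n ∧
      (q : ℕ) = ((m : ℕ) + t) % k) ∧
    ∀ i ∈ inactivePegs a, ∀ x : Fin k, ∀ t : ℕ, 1 ≤ t → t ≤ n - 1 →
      ((x : ℕ) + t) % k = (i : ℕ) → rootPerm a x = x)}

/-- The family `R̄_{k,n}`: the identity together with all Hanoi automorphisms
`a` such that (1) `Q_a ⊆ {m+1, …, m+n}` for some `m`, and (2) whenever
`i ∈ Q_a` the root permutation of `a` fixes `i+1, …, i+(n-1)`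
(all peg labels mod `k`). -/
noncomputable def Rover (k n : ℕ) : Set (Equiv.Perm (Word k)) :=
  {a | a = 1 ∨ (IsHanoiAut a ∧
    (∃ m : Fin k, ∀ q ∈ inactivePegs a, ∃ t : ℕ, 1 ≤ t ∧ t ≤ n ∧
      (q : ℕ) = ((m : ℕ) + t) % k) ∧
    ∀ i ∈ inactivePegs a, ∀ x : Fin k, ∀ t : ℕ, 1 ≤ t → t ≤ n - 1 →
      (x : ℕ) = ((i : ℕ) + t) % k → rootPerm a x = x)}

/-- The finite word `x_m … x_1` (first letter `x_m`) read off from a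
left-infinite sequence `… x_2 x_1`, encoded as `x : ℕ → Fin k` with
`x s = x_{s+1}`. -/
def wordOf {k : ℕ} (x : ℕ → Fin k) (m : ℕ) : Word k := (List.range m).reverse.map x

/-! ### Auxiliary lemmas for Statement 9 -/

section Aux

variable {k : ℕ}

lemma isTreeAut_one : IsTreeAut (1 : Equiv.Perm (Word k)) :=
  ⟨fun _ => rfl, fun _ _ _ h => h⟩

lemma IsTreeAut.mul {e f : Equiv.Perm (Word k)} (he : IsTreeAut e) (hf : IsTreeAut f) :
    IsTreeAut (e * f) := by
  constructor
  · intro w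
    simpa [Equiv.Perm.mul_apply] using (he.1 (f w)).trans (hf.1 w)
  · intro w v n h
    exact he.2 _ _ _ (hf.2 _ _ _ h)

lemma IsTreeAut.take_apply {e : Equiv.Perm (Word k)} (he : IsTreeAut e) (w : Word k) {n : ℕ}
    (hn : n ≤ w.length) : (e w).take n = e (w.take n) := by
  have h1 : w.take n = (w.take n).take n := by simp [List.take_take]
  have h2 := he.2 w (w.take n) n h1
  have h3 : (e (w.take n)).length = n := by
    rw [he.1]; simpa using hn
  rw [h2, List.take_of_length_le h3.le]

lemma IsTreeAut.inv {e : Equiv.Perm (Word k)} (he : IsTreeAut e) : IsTreeAut e⁻¹ := by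
  have hlen : ∀ w : Word k, ((e⁻¹ : Equiv.Perm (Word k)) w).length = w.length := by
    intro w
    conv_rhs => rw [← (show e (e⁻¹ w) = w from e.apply_symm_apply w)]
    rw [he.1]
  refine ⟨hlen, ?_⟩
  intro w v n h
  have hlw := congrArg List.length h
  simp only [List.length_take] at hlw
  rcases le_or_gt n w.length with hn | hn
  · have hnv : n ≤ v.length := by omega
    have h1 : e (((e⁻¹ : Equiv.Perm (Word k)) w).take n)
        = e (((e⁻¹ : Equiv.Perm (Word k)) v).take n) := by
      rw [← he.take_apply _ (by rw [hlen]; exact hn),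
          ← he.take_apply _ (by rw [hlen]; exact hnv)]
      simp only [Equiv.Perm.coe_inv, Equiv.apply_symm_apply]
      exact h
    exact e.injective h1
  · have hw : w.take n = w := List.take_of_length_le hn.le
    have hv : v.take n = v := List.take_of_length_le (by omega)
    rw [hw, hv] at h
    rw [h]

lemma IsTreeAut.apply_nil {e : Equiv.Perm (Word k)} (he : IsTreeAut e) : e ([] : Word k) = [] :=
  List.length_eq_zero_iff.mp (he.1 [])

lemma IsTreeAut.exists_singleton {e : Equiv.Perm (Word k)} (he : IsTreeAut e) (x : Fin k) :
    ∃ y, e [x] = [y] :=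
  List.length_eq_one_iff.mp (he.1 [x])

lemma IsTreeAut.cons_eq {e : Equiv.Perm (Word k)} (he : IsTreeAut e) (x : Fin k) (w : Word k) :
    e (x :: w) = ((e [x]).head?.getD x) :: (e (x :: w)).tail := by
  obtain ⟨y, hy⟩ := he.exists_singleton x
  have hlen : (e (x :: w)).length = w.length + 1 := by simp [he.1]
  obtain ⟨a, t, hat⟩ := List.exists_cons_of_ne_nil
    (show e (x :: w) ≠ [] by intro hnil; rw [hnil] at hlen; simp at hlen)
  have htake := he.2 (x :: w) [x] 1 (by simp)
  rw [hat, hy] at htake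
  simp at htake
  rw [hat, hy]
  simp [htake]

lemma rootPerm_bij {e : Equiv.Perm (Word k)} (he : IsTreeAut e) :
    Function.Bijective (fun x : Fin k => ((e [x]).head?.getD x)) := by
  have hinj : Function.Injective (fun x : Fin k => ((e [x]).head?.getD x)) := by
    intro a b hab
    obtain ⟨ya, hya⟩ := he.exists_singleton a
    obtain ⟨yb, hyb⟩ := he.exists_singleton b
    simp only [hya, hyb, List.head?_cons, Option.getD_some] at hab
    have : e [a] = e [b] := by rw [hya, hyb, hab]
    simpa using e.injective this
  exact Finite.injective_iff_bijective.mp hinj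

lemma rootPerm_apply {e : Equiv.Perm (Word k)} (he : IsTreeAut e) (x : Fin k) :
    e [x] = [rootPerm e x] := by
  unfold rootPerm
  rw [dif_pos (rootPerm_bij he)]
  obtain ⟨y, hy⟩ := he.exists_singleton x
  simp [Equiv.ofBijective_apply, hy]

lemma sec_bij {e : Equiv.Perm (Word k)} (he : IsTreeAut e) (x : Fin k) :
    Function.Bijective (fun w : Word k => (e (x :: w)).tail) := by
  constructor
  · intro w v hwv
    simp only at hwv
    have hw := he.cons_eq x w
    have hv := he.cons_eq x v
    have : e (x :: w) = e (x :: v) := by rw [hw, hv, hwv]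
    simpa using e.injective this
  · intro t
    obtain ⟨y, hy⟩ := he.exists_singleton x
    have hul : ((e⁻¹ : Equiv.Perm (Word k)) (y :: t)).length = t.length + 1 := by
      simpa using he.inv.1 (y :: t)
    have hu1 : ((e⁻¹ : Equiv.Perm (Word k)) (y :: t)).take 1 = [x] := by
      have h1 := he.inv.take_apply (y :: t) (n := 1) (by simp)
      have h2 : (y :: t).take 1 = [y] := by simp
      rw [h2] at h1
      rw [h1, ← hy]
      simp
    obtain ⟨a, r, har⟩ := List.exists_cons_of_ne_nil
      (show (e⁻¹ : Equiv.Perm (Word k)) (y :: t) ≠ [] by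
        intro hnil; rw [hnil] at hul; simp at hul)
    have hax : a = x := by rw [har] at hu1; simpa using hu1
    refine ⟨r, ?_⟩
    have hexr : e (x :: r) = y :: t := by
      rw [← hax, ← har]
      simp
    simp [hexr]

lemma sec_apply {e : Equiv.Perm (Word k)} (he : IsTreeAut e) (x : Fin k) (w : Word k) :
    sec e x w = (e (x :: w)).tail := by
  unfold sec
  rw [dif_pos (sec_bij he x)]
  rfl

lemma apply_cons {e : Equiv.Perm (Word k)} (he : IsTreeAut e) (x : Fin k) (w : Word k) :
    e (x :: w) = rootPerm e x :: sec e x w := by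
  have h1 := he.cons_eq x w
  have h2 : (e [x]).head?.getD x = rootPerm e x := by
    rw [rootPerm_apply he x]; rfl
  rw [sec_apply he, ← h2]
  exact h1

lemma sec_one (x : Fin k) : sec (1 : Equiv.Perm (Word k)) x = 1 := by
  ext w
  rw [sec_apply isTreeAut_one]
  rfl

lemma rootPerm_one : rootPerm (1 : Equiv.Perm (Word k)) = 1 := by
  apply Equiv.ext
  intro x
  have h : [x] = [rootPerm (1 : Equiv.Perm (Word k)) x] :=
    rootPerm_apply (isTreeAut_one (k := k)) x
  injection h with h1 _
  exact h1.symm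

lemma rootPerm_mul {g h : Equiv.Perm (Word k)} (hg : IsTreeAut g) (hh : IsTreeAut h) :
    rootPerm (g * h) = rootPerm g * rootPerm h := by
  apply Equiv.ext
  intro x
  have h1 := rootPerm_apply (hg.mul hh) x
  have h2 : (g * h) [x] = [rootPerm g (rootPerm h x)] := by
    simp only [Equiv.Perm.mul_apply]
    rw [rootPerm_apply hh x, rootPerm_apply hg]
  have h3 := h2.symm.trans h1
  injection h3 with h4 _
  exact h4.symm

lemma sec_mul {g h : Equiv.Perm (Word k)} (hg : IsTreeAut g) (hh : IsTreeAut h) (x : Fin k) :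
    sec (g * h) x = sec g (rootPerm h x) * sec h x := by
  ext w
  rw [sec_apply (hg.mul hh)]
  simp only [Equiv.Perm.mul_apply]
  rw [apply_cons hh, sec_apply hg]

lemma IsTreeAut.sec {e : Equiv.Perm (Word k)} (he : IsTreeAut e) (x : Fin k) :
    IsTreeAut (Hanoi.sec e x) := by
  constructor
  · intro w
    rw [sec_apply he]
    simp [he.1]
  · intro w v n h
    rw [sec_apply he, sec_apply he]
    have h2 := he.2 (x :: w) (x :: v) (n + 1) (by simpa using h)
    have key : ∀ l : Word k, l.tail.take n = (l.take (n + 1)).tail := by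
      intro l
      cases l <;> simp
    rw [key, key, h2]

lemma prod_isTreeAut : ∀ L : List (Equiv.Perm (Word k)),
    (∀ s ∈ L, IsTreeAut s) → IsTreeAut L.prod
  | [], _ => by simpa using isTreeAut_one
  | s :: T, h => by
    rw [List.prod_cons]
    exact (h s (List.mem_cons_self (a := s) (l := T))).mul
      (prod_isTreeAut T fun t ht => h t (List.mem_cons_of_mem s ht))

lemma rootPerm_inv {g : Equiv.Perm (Word k)} (hg : IsTreeAut g) :
    rootPerm g⁻¹ = (rootPerm g)⁻¹ := by
  have h := rootPerm_mul hg.inv hg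
  rw [inv_mul_cancel, rootPerm_one] at h
  exact eq_inv_of_mul_eq_one_left h.symm

lemma sec_inv {g : Equiv.Perm (Word k)} (hg : IsTreeAut g) (y : Fin k) :
    sec g⁻¹ y = (sec g ((rootPerm g)⁻¹ y))⁻¹ := by
  have h := sec_mul hg.inv hg ((rootPerm g)⁻¹ y)
  rw [inv_mul_cancel, sec_one, (show (rootPerm g) ((rootPerm g)⁻¹ y) = y from (rootPerm g).apply_symm_apply y)] at h
  exact eq_inv_of_mul_eq_one_left h.symm

end Aux
section Aux2

variable {k : ℕ}

lemma isHanoiWith_one (Q : Set (Fin k)) : IsHanoiWith (1 : Equiv.Perm (Word k)) Q :=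
  ⟨isTreeAut_one, fun i _ => sec_one i, fun j _ => sec_one j,
    fun j _ => by rw [rootPerm_one]; rfl⟩

lemma hanoiWith_unique {a : Equiv.Perm (Word k)} {Q Q' : Set (Fin k)} (ha : a ≠ 1)
    (h : IsHanoiWith a Q) (h' : IsHanoiWith a Q') : Q = Q' := by
  ext x
  constructor
  · intro hx
    by_contra hx'
    exact ha ((h.2.2.1 x hx).symm.trans (h'.2.1 x hx'))
  · intro hx
    by_contra hx'
    exact ha ((h'.2.2.1 x hx).symm.trans (h.2.1 x hx'))

lemma inactivePegs_eq {a : Equiv.Perm (Word k)} {Q : Set (Fin k)} (ha : a ≠ 1)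
    (h : IsHanoiWith a Q) : inactivePegs a = Q := by
  unfold inactivePegs
  rw [if_neg ha, dif_pos ⟨Q, h⟩]
  exact hanoiWith_unique ha (⟨Q, h⟩ : ∃ Q, IsHanoiWith a Q).choose_spec h

lemma inactivePegs_one : inactivePegs (1 : Equiv.Perm (Word k)) = Set.univ := by
  unfold inactivePegs
  rw [if_pos rfl]

lemma one_not_mem_hanoiSet (hk : 3 ≤ k) : (1 : Equiv.Perm (Word k)) ∉ hanoiSet k 1 := by
  intro h1
  have h2 := h1.2
  rw [inactivePegs_one, Set.ncard_univ, Nat.card_eq_fintype_card, Fintype.card_fin] at h2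
  omega

lemma mem_hanoiSet_elim {a : Equiv.Perm (Word k)} (hk : 3 ≤ k) (ha : a ∈ hanoiSet k 1) :
    a ≠ 1 ∧ ∃ j : Fin k, IsHanoiWith a {j} ∧ inactivePegs a = {j} := by
  have hane : a ≠ 1 := fun h => one_not_mem_hanoiSet hk (h ▸ ha)
  obtain ⟨⟨Q, hQ⟩, hcard⟩ := ha
  have hpegs : inactivePegs a = Q := inactivePegs_eq hane hQ
  rw [hpegs] at hcard
  obtain ⟨j, rfl⟩ := Set.ncard_eq_one.mp hcard
  exact ⟨hane, j, hQ, hpegs⟩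

lemma mem_hanoiSet_of {a : Equiv.Perm (Word k)} (ha : a ≠ 1) {j : Fin k}
    (h : IsHanoiWith a {j}) : a ∈ hanoiSet k 1 :=
  ⟨⟨{j}, h⟩, by rw [inactivePegs_eq ha h]; simp⟩

lemma inv_mem_hanoiSet (hk : 3 ≤ k) {a : Equiv.Perm (Word k)} (ha : a ∈ hanoiSet k 1) :
    a⁻¹ ∈ hanoiSet k 1 := by
  obtain ⟨hane, j, hj, hpegs⟩ := mem_hanoiSet_elim hk ha
  have hta := hj.1
  have hfixj : rootPerm a j = j := hj.2.2.2 j rfl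
  have hfixj' : (rootPerm a)⁻¹ j = j := by
    conv_lhs => rw [← hfixj]
    simp
  refine mem_hanoiSet_of (by simpa using hane) (j := j) ⟨hta.inv, ?_, ?_, ?_⟩
  · intro i hi
    rw [sec_inv hta i]
    have hne : (rootPerm a)⁻¹ i ∉ ({j} : Set (Fin k)) := by
      simp only [Set.mem_singleton_iff]
      intro h
      apply hi
      have : i = rootPerm a j := by rw [← h]; simp
      rw [hfixj] at this
      simp [this]
    rw [hj.2.1 _ hne]
    simp
  · intro i hi
    rw [Set.mem_singleton_iff] at hi
    subst hi
    rw [sec_inv hta, hfixj', hj.2.2.1 i rfl]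
  · intro i hi
    rw [Set.mem_singleton_iff] at hi
    subst hi
    rw [rootPerm_inv hta]
    exact hfixj'

lemma prod_isHanoiWith {Q : Set (Fin k)} :
    ∀ L : List (Equiv.Perm (Word k)), (∀ s ∈ L, IsHanoiWith s Q) → IsHanoiWith L.prod Q
  | [], _ => by simpa using isHanoiWith_one Q
  | s :: T, h => by
    have hs := h s (List.mem_cons_self (a := s) (l := T))
    have hT := prod_isHanoiWith T (fun t ht => h t (List.mem_cons_of_mem s ht))
    rw [List.prod_cons]
    have hts := hs.1
    have htT := hT.1
    have hmove : ∀ i, i ∉ Q → rootPerm T.prod i ∉ Q := by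
      intro i hi hmem
      have h1 : rootPerm T.prod (rootPerm T.prod i) = rootPerm T.prod i :=
        hT.2.2.2 _ hmem
      have h2 : rootPerm T.prod i = i := (rootPerm T.prod).injective h1
      rw [h2] at hmem
      exact hi hmem
    refine ⟨hts.mul htT, ?_, ?_, ?_⟩
    · intro i hi
      rw [sec_mul hts htT i, hT.2.1 i hi, hs.2.1 _ (hmove i hi)]
      simp
    · intro i hi
      rw [sec_mul hts htT i, hT.2.2.1 i hi, hT.2.2.2 i hi, hs.2.2.1 i hi]
    · intro i hi
      rw [rootPerm_mul hts htT, Equiv.Perm.mul_apply, hT.2.2.2 i hi, hs.2.2.2 i hi]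

lemma secW_one : ∀ v : Word k, secW (1 : Equiv.Perm (Word k)) v = 1
  | [] => rfl
  | x :: v => by
    simp only [secW, sec_one]
    exact secW_one v

lemma secW_hanoi {a : Equiv.Perm (Word k)} {Q : Set (Fin k)} (h : IsHanoiWith a Q) :
    ∀ v : Word k, secW a v = a ∨ secW a v = 1
  | [] => Or.inl rfl
  | x :: v => by
    simp only [secW]
    by_cases hx : x ∈ Q
    · rw [h.2.2.1 x hx]
      exact secW_hanoi h v
    · rw [h.2.1 x hx]
      exact Or.inr (secW_one v)

lemma secW_replicate {g : Equiv.Perm (Word k)} {j : Fin k} (h : sec g j = g) :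
    ∀ m : ℕ, secW g (List.replicate m j) = g
  | 0 => rfl
  | m + 1 => by
    rw [List.replicate_succ]
    simp only [secW, h]
    exact secW_replicate h m

lemma hanoi_ext {a b : Equiv.Perm (Word k)} {Q : Set (Fin k)} (ha : IsHanoiWith a Q)
    (hb : IsHanoiWith b Q) (hr : rootPerm a = rootPerm b) : a = b := by
  apply Equiv.ext
  intro w
  induction w with
  | nil => rw [ha.1.apply_nil, hb.1.apply_nil]
  | cons x w ihw =>
    rw [apply_cons ha.1, apply_cons hb.1, hr]
    by_cases hx : x ∈ Q
    · rw [ha.2.2.1 x hx, hb.2.2.1 x hx, ihw]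
    · rw [ha.2.1 x hx, hb.2.1 x hx]

end Aux2
section Aux3

variable {k : ℕ}

lemma sec_prod_rep :
    ∀ L : List (Equiv.Perm (Word k)), (∀ s ∈ L, IsHanoiWith s (inactivePegs s)) →
      ∀ x : Fin k, ∃ M : List (Equiv.Perm (Word k)), M.Sublist L ∧
        sec L.prod x = M.prod ∧
        (L.length ≤ M.length → (∀ s ∈ L, x ∈ inactivePegs s) ∧ rootPerm L.prod x = x)
  | [], _, x => by
    refine ⟨[], List.Sublist.refl _, ?_, ?_⟩
    · rw [List.prod_nil, sec_one]
    · intro _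
      refine ⟨fun s hs => absurd hs List.not_mem_nil, ?_⟩
      rw [List.prod_nil, rootPerm_one]
      rfl
  | s :: T, h, x => by
    have hs := h s (List.mem_cons_self (a := s) (l := T))
    have hT := fun t ht => h t (List.mem_cons_of_mem s ht)
    obtain ⟨M, hsub, hsec, htrig⟩ := sec_prod_rep T hT x
    have hts : IsTreeAut s := hs.1
    have htT : IsTreeAut T.prod := prod_isTreeAut T fun t ht => (hT t ht).1
    rw [List.prod_cons]
    by_cases hlen : T.length ≤ M.length
    · obtain ⟨hall, hfix⟩ := htrig hlen
      by_cases hy : x ∈ inactivePegs s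
      · refine ⟨s :: M, hsub.cons₂ s, ?_, ?_⟩
        · rw [sec_mul hts htT, hsec, hfix, hs.2.2.1 x hy, List.prod_cons]
        · intro _
          constructor
          · intro t ht
            rcases List.mem_cons.mp ht with rfl | ht
            · exact hy
            · exact hall t ht
          · rw [rootPerm_mul hts htT, Equiv.Perm.mul_apply, hfix, hs.2.2.2 x hy]
      · refine ⟨M, hsub.cons s, ?_, ?_⟩
        · rw [sec_mul hts htT, hsec, hfix, hs.2.1 x hy, one_mul]
        · intro hcon
          have h1 := hsub.length_le
          simp only [List.length_cons] at hcon
          omega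
    · by_cases hy : rootPerm T.prod x ∈ inactivePegs s
      · refine ⟨s :: M, hsub.cons₂ s, ?_, ?_⟩
        · rw [sec_mul hts htT, hsec, hs.2.2.1 _ hy, List.prod_cons]
        · intro hcon
          have h1 := hsub.length_le
          simp only [List.length_cons] at hcon
          omega
      · refine ⟨M, hsub.cons s, ?_, ?_⟩
        · rw [sec_mul hts htT, hsec, hs.2.1 _ hy, one_mul]
        · intro hcon
          have h1 := hsub.length_le
          simp only [List.length_cons] at hcon
          omega

lemma main_contract (hk : 3 ≤ k) :
    ∀ n : ℕ, ∀ L : List (Equiv.Perm (Word k)), (∀ s ∈ L, s ∈ hanoiSet k 1) → L.length ≤ n →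
      ∃ m : ℕ, ∀ v : Word k, m ≤ v.length →
        secW L.prod v ∈ (hanoiSet k 1 ∪ {1} : Set (Equiv.Perm (Word k))) := by
  intro n
  induction n with
  | zero =>
    intro L hL hlen
    have hnil : L = [] := List.length_eq_zero_iff.mp (Nat.le_zero.mp hlen)
    subst hnil
    refine ⟨0, fun v _ => ?_⟩
    rw [List.prod_nil, secW_one]
    exact Or.inr rfl
  | succ n ih =>
    intro L hL hlen
    rcases L with _ | ⟨s₀, T⟩
    · refine ⟨0, fun v _ => ?_⟩
      rw [List.prod_nil, secW_one]
      exact Or.inr rfl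
    have hhan : ∀ s ∈ s₀ :: T, IsHanoiWith s (inactivePegs s) := by
      intro s hsmem
      obtain ⟨hne, j, hj, hpegs⟩ := mem_hanoiSet_elim hk (hL s hsmem)
      rw [hpegs]
      exact hj
    by_cases hall : ∀ s ∈ s₀ :: T, inactivePegs s = inactivePegs s₀
    · -- all generators share the same inactive peg
      obtain ⟨hne₀, j, hj₀, hpegs₀⟩ :=
        mem_hanoiSet_elim hk (hL s₀ (List.mem_cons_self (a := s₀) (l := T)))
      have hallj : ∀ s ∈ s₀ :: T, IsHanoiWith s {j} := by
        intro s hsmem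
        have h1 := hhan s hsmem
        rw [hall s hsmem, hpegs₀] at h1
        exact h1
      have hg : IsHanoiWith (s₀ :: T).prod {j} := prod_isHanoiWith _ hallj
      refine ⟨0, fun v _ => ?_⟩
      rcases secW_hanoi hg v with h | h
      · rw [h]
        by_cases hone : (s₀ :: T).prod = 1
        · rw [hone]; exact Or.inr rfl
        · exact Or.inl (mem_hanoiSet_of hone hg)
      · rw [h]; exact Or.inr rfl
    · push_neg at hall
      obtain ⟨s₁, hs₁mem, hs₁ne⟩ := hall
      have hsecx : ∀ x : Fin k, ∃ m : ℕ, ∀ v : Word k, m ≤ v.length →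
          secW (sec (s₀ :: T).prod x) v ∈ (hanoiSet k 1 ∪ {1} : Set (Equiv.Perm (Word k))) := by
        intro x
        obtain ⟨M, hsub, hsecx, htrig⟩ := sec_prod_rep (s₀ :: T) hhan x
        have hMlt : M.length < (s₀ :: T).length := by
          rcases lt_or_ge M.length (s₀ :: T).length with h | h
          · exact h
          · exfalso
            obtain ⟨hallx, _⟩ := htrig h
            obtain ⟨hne₀, j₀, hj₀, hpegs₀⟩ :=
              mem_hanoiSet_elim hk (hL s₀ (List.mem_cons_self (a := s₀) (l := T)))
            obtain ⟨hne₁, j₁, hj₁, hpegs₁⟩ := mem_hanoiSet_elim hk (hL s₁ hs₁mem)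
            have h0 := hallx s₀ (List.mem_cons_self (a := s₀) (l := T))
            have h1 := hallx s₁ hs₁mem
            rw [hpegs₀, Set.mem_singleton_iff] at h0
            rw [hpegs₁, Set.mem_singleton_iff] at h1
            apply hs₁ne
            rw [hpegs₀, hpegs₁, ← h0, ← h1]
        rw [hsecx]
        refine ih M (fun t ht => hL t (hsub.subset ht)) ?_
        simp only [List.length_cons] at hMlt hlen
        omega
      choose mx hmx using hsecx
      refine ⟨(Finset.univ.sup mx) + 1, fun v hv => ?_⟩
      rcases v with _ | ⟨x, v'⟩
      · simp at hv
      simp only [secW]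
      apply hmx x
      have hle : mx x ≤ Finset.univ.sup mx := Finset.le_sup (Finset.mem_univ x)
      simp only [List.length_cons] at hv
      omega

lemma cleanup : ∀ L : List (Equiv.Perm (Word k)), ∃ L' : List (Equiv.Perm (Word k)),
    (∀ s ∈ L', s ∈ L ∧ s ≠ 1) ∧ L'.prod = L.prod
  | [] => ⟨[], by simp, rfl⟩
  | s :: T => by
    obtain ⟨L', h1, h2⟩ := cleanup T
    by_cases hs : s = 1
    · refine ⟨L', fun t ht => ⟨List.mem_cons_of_mem s (h1 t ht).1, (h1 t ht).2⟩, ?_⟩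
      rw [List.prod_cons, hs, one_mul, h2]
    · refine ⟨s :: L', ?_, ?_⟩
      · intro t ht
        rcases List.mem_cons.mp ht with h | ht
        · rw [h]
          exact ⟨List.mem_cons_self (a := s) (l := T), hs⟩
        · exact ⟨List.mem_cons_of_mem s (h1 t ht).1, (h1 t ht).2⟩
      · rw [List.prod_cons, List.prod_cons, h2]

lemma exists_rep {S' : Set (Equiv.Perm (Word k))} {g : Equiv.Perm (Word k)}
    (hg : g ∈ Subgroup.closure S') : ∃ L, IsRepOf S' L g := by
  induction hg using Subgroup.closure_induction with
  | mem x hx =>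
    exact ⟨[x], fun s hs => by rw [List.mem_singleton.mp hs]; exact Or.inl hx, by simp⟩
  | one => exact ⟨[], fun s hs => absurd hs List.not_mem_nil, rfl⟩
  | mul x y hx hy ihx ihy =>
    obtain ⟨L₁, h₁, p₁⟩ := ihx
    obtain ⟨L₂, h₂, p₂⟩ := ihy
    exact ⟨L₁ ++ L₂, fun s hs => (List.mem_append.mp hs).elim (h₁ s) (h₂ s), by
      rw [List.prod_append, p₁, p₂]⟩
  | inv x hx ihx =>
    obtain ⟨L, h, p⟩ := ihx
    refine ⟨(L.map (·⁻¹)).reverse, ?_, ?_⟩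
    · intro s hs
      simp only [List.mem_reverse, List.mem_map] at hs
      obtain ⟨t, ht, rfl⟩ := hs
      rcases h t ht with h' | h'
      · exact Or.inr (by simpa using h')
      · exact Or.inl h'
    · rw [← p]
      exact (List.prod_inv_reverse L).symm

lemma N_finite (hk : 3 ≤ k) :
    (hanoiSet k 1 ∪ {1} : Set (Equiv.Perm (Word k))).Finite := by
  have hinj : Set.InjOn (fun a => (rootPerm a, inactivePegs a))
      (hanoiSet k 1 ∪ {1} : Set (Equiv.Perm (Word k))) := by
    intro a ha b hb hab
    simp only [Prod.mk.injEq] at hab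
    have hcard : ∀ c : Equiv.Perm (Word k), c ∈ hanoiSet k 1 → c ≠ 1 := by
      intro c hc h1
      exact one_not_mem_hanoiSet hk (h1 ▸ hc)
    rcases ha with ha | ha <;> rcases hb with hb | hb
    · obtain ⟨hane, ja, hja, hpa⟩ := mem_hanoiSet_elim hk ha
      obtain ⟨hbne, jb, hjb, hpb⟩ := mem_hanoiSet_elim hk hb
      have hjj : ja = jb := by
        have := hab.2
        rw [hpa, hpb] at this
        simpa using this
      subst hjj
      exact hanoi_ext hja hjb hab.1
    · exfalso
      rw [Set.mem_singleton_iff] at hb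
      subst hb
      obtain ⟨hane, ja, hja, hpa⟩ := mem_hanoiSet_elim hk ha
      have := hab.2
      rw [hpa, inactivePegs_one] at this
      have h2 := congrArg Set.ncard this
      rw [Set.ncard_singleton, Set.ncard_univ, Nat.card_eq_fintype_card,
        Fintype.card_fin] at h2
      omega
    · exfalso
      rw [Set.mem_singleton_iff] at ha
      subst ha
      obtain ⟨hbne, jb, hjb, hpb⟩ := mem_hanoiSet_elim hk hb
      have := hab.2
      rw [hpb, inactivePegs_one] at this
      have h2 := congrArg Set.ncard this
      rw [Set.ncard_singleton, Set.ncard_univ, Nat.card_eq_fintype_card,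
        Fintype.card_fin] at h2
      omega
    · rw [Set.mem_singleton_iff] at ha hb
      rw [ha, hb]
  exact Set.Finite.of_finite_image (Set.toFinite _) hinj

end Aux3
/-- Corollary: `H_c^{(k)}` is contracting, with nucleus
`S_{k,1} ∪ {1}`. -/
theorem Hc_contracting {k : ℕ} (hk : 3 ≤ k) :
    IsContracting (Subgroup.closure (hanoiSet k 1 ∪ {1})) ∧
    preNucleus (Subgroup.closure (hanoiSet k 1 ∪ {1})) = hanoiSet k 1 ∪ {1} ∧
    IsNucleus (Subgroup.closure (hanoiSet k 1 ∪ {1})) (hanoiSet k 1 ∪ {1}) := by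
  have hNfin := N_finite (k := k) hk
  have hNsub : (hanoiSet k 1 ∪ {1} : Set (Equiv.Perm (Word k))) ⊆
      (Subgroup.closure (hanoiSet k 1 ∪ {1}) : Subgroup (Equiv.Perm (Word k))) :=
    Subgroup.subset_closure
  have hcontr : ∀ g ∈ Subgroup.closure (hanoiSet k 1 ∪ {1}), ∃ m : ℕ, ∀ v : Word k,
      m ≤ v.length → secW g v ∈ (hanoiSet k 1 ∪ {1} : Set (Equiv.Perm (Word k))) := by
    intro g hg
    obtain ⟨L, hLm, hLp⟩ := exists_rep hg
    obtain ⟨L', hm', hp'⟩ := cleanup L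
    have hents : ∀ s ∈ L', s ∈ hanoiSet k 1 := by
      intro s hsm
      obtain ⟨hsL, hs1⟩ := hm' s hsm
      rcases hLm s hsL with h | h
      · rcases h with h | h
        · exact h
        · exact absurd (by simpa using h) hs1
      · rcases h with h | h
        · simpa using inv_mem_hanoiSet hk h
        · refine absurd ?_ hs1
          have : s⁻¹ = 1 := by simpa using h
          simpa using this
    have hmain := main_contract hk L'.length L' hents le_rfl
    rwa [hp', hLp] at hmain
  have hsecself : ∀ a ∈ (hanoiSet k 1 ∪ {1} : Set (Equiv.Perm (Word k))),
      ∃ j : Fin k, sec a j = a := by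
    intro a ha
    rcases ha with ha | ha
    · obtain ⟨_, j, hj, _⟩ := mem_hanoiSet_elim hk ha
      exact ⟨j, hj.2.2.1 j rfl⟩
    · rw [Set.mem_singleton_iff] at ha
      subst ha
      exact ⟨⟨0, by omega⟩, sec_one _⟩
  have hpre : preNucleus (Subgroup.closure (hanoiSet k 1 ∪ {1})) = hanoiSet k 1 ∪ {1} := by
    ext g
    constructor
    · rintro ⟨hgG, j, hj⟩
      obtain ⟨m, hm⟩ := hcontr g hgG
      have h1 := hm (List.replicate m j) (by simp)
      rwa [secW_replicate hj m] at h1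
    · intro hg
      exact ⟨hNsub hg, hsecself g hg⟩
  refine ⟨⟨hanoiSet k 1 ∪ {1}, hNfin, hNsub, hcontr⟩, hpre, ⟨hNfin, hNsub, hcontr⟩, ?_⟩
  intro N' hN'fin hN'sub hN' a ha
  obtain ⟨m, hm⟩ := hN' a (hNsub ha)
  obtain ⟨j, hj⟩ := hsecself a ha
  have h1 := hm (List.replicate m j) (by simp)
  rwa [secW_replicate hj m] at h1

end Hanoi
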